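/- Let p(·|μ,σ) be a location-scale family on ℝ^d generated by a mean-zero, identity-covariance probability measure f. For any probability measure q on ℝ^d with finite second moment, mean m, and covariance matrix Σ̂, letting σ̂ = (1/d)tr(Σ̂^{1/2}), we have W₂(p(·|μ,σ), q)² ≥ ‖m − μ‖² + d(σ̂ − σ)² = W₂(p(·|μ,σ), p(·|m,σ̂))². Hence the plug-in density p(·|m, σ̂) dominates q pointwise in Wasserstein loss. -/

import Mathlib

open MeasureTheory ProbabilityTheory
open scoped Matrix

/-- Squared L² Wasserstein distance on probability measures on ℝ^d (as `Fin d → ℝ`),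
defined as the infimum over couplings of the expected squared Euclidean distance. -/
noncomputable def W2sq {d : ℕ} (p q : Measure (Fin d → ℝ)) : ℝ :=
  sInf {r : ℝ | ∃ μ : Measure ((Fin d → ℝ) × (Fin d → ℝ)),
    IsProbabilityMeasure μ ∧ μ.map Prod.fst = p ∧ μ.map Prod.snd = q ∧
    r = ∫ z, ∑ i, (z.1 i - z.2 i) ^ 2 ∂μ}

/-- L² Wasserstein distance. -/
noncomputable def W2 {d : ℕ} (p q : Measure (Fin d → ℝ)) : ℝ := Real.sqrt (W2sq p q)


/-- The positive semidefinite square root of a positive semidefinite matrix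
(`Matrix.PosSemidef.sqrt`, removed from Mathlib; restored with its old definition). -/
noncomputable def Matrix.PosSemidef.sqrt {n 𝕜 : Type*} [Fintype n] [DecidableEq n] [RCLike 𝕜]
    [PartialOrder 𝕜]     {A : Matrix n n 𝕜} (hA : A.PosSemidef) : Matrix n n 𝕜 :=
  hA.1.eigenvectorUnitary.1 * Matrix.diagonal ((↑) ∘ (√·) ∘ hA.1.eigenvalues) *
  (star hA.1.eigenvectorUnitary : Matrix n n 𝕜)


/-- Location-scale family generated by `f`: pushforward of `f` under `z ↦ σ z + μ`. -/
noncomputable def locScaleFam {d : ℕ} (f : Measure (Fin d → ℝ)) (μ : Fin d → ℝ) (σ : ℝ) :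
    Measure (Fin d → ℝ) := f.map (fun z => σ • z + μ)


section Helpers
variable {d : ℕ} {α : Type*} [MeasurableSpace α] {ν : Measure α}

lemma integrable_dom {g H : α → ℝ} (hg : AEStronglyMeasurable g ν) (hH : Integrable H ν)
    (hb : ∀ ω, |g ω| ≤ H ω) : Integrable g ν :=
  hH.mono' hg (Filter.Eventually.of_forall fun ω => by simpa [Real.norm_eq_abs] using hb ω)

lemma integrable_of_sq [IsFiniteMeasure ν] {g S : α → ℝ} (hg : AEStronglyMeasurable g ν)
    (hS : Integrable S ν) (hb : ∀ ω, g ω ^ 2 ≤ S ω) : Integrable g ν :=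
  integrable_dom hg (hS.add (integrable_const 1)) fun ω => by
    have h1 := hb ω
    have h2 : |g ω| ^ 2 = g ω ^ 2 := sq_abs _
    show |g ω| ≤ S ω + 1
    nlinarith [abs_nonneg (g ω)]

lemma integrable_mul_of_sq {g h S : α → ℝ} (hg : AEStronglyMeasurable g ν)
    (hh : AEStronglyMeasurable h ν) (hS : Integrable S ν)
    (hgb : ∀ ω, g ω ^ 2 ≤ S ω) (hhb : ∀ ω, h ω ^ 2 ≤ S ω) :
    Integrable (fun ω => g ω * h ω) ν :=
  integrable_dom (hg.mul hh) hS fun ω => by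
    have h1 := hgb ω; have h2 := hhb ω
    have h3 : |g ω * h ω| = |g ω| * |h ω| := abs_mul _ _
    nlinarith [sq_nonneg (|g ω| - |h ω|), sq_abs (g ω), sq_abs (h ω), abs_nonneg (g ω),
      abs_nonneg (h ω)]

lemma integrable_centered_mul [IsFiniteMeasure ν] {g h S : α → ℝ} (hg : AEStronglyMeasurable g ν)
    (hh : AEStronglyMeasurable h ν) (hS : Integrable S ν) (c e : ℝ)
    (hgb : ∀ ω, g ω ^ 2 ≤ S ω) (hhb : ∀ ω, h ω ^ 2 ≤ S ω) :
    Integrable (fun ω => (g ω - c) * (h ω - e)) ν := by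
  refine integrable_mul_of_sq (hg.sub aestronglyMeasurable_const)
    (hh.sub aestronglyMeasurable_const)
    ((hS.const_mul 2).add (integrable_const (2 * c ^ 2 + 2 * e ^ 2))) ?_ ?_
  · intro ω; have := hgb ω
    show (g ω - c) ^ 2 ≤ 2 * S ω + (2 * c ^ 2 + 2 * e ^ 2)
    nlinarith [sq_nonneg (g ω + c), sq_nonneg e]
  · intro ω; have := hhb ω
    show (h ω - e) ^ 2 ≤ 2 * S ω + (2 * c ^ 2 + 2 * e ^ 2)
    nlinarith [sq_nonneg (h ω + e), sq_nonneg c]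

variable {β : Type*} [MeasurableSpace β]

lemma transfer_int {T : α → β} {p : Measure β} (hT : Measurable T) (hmap : ν.map T = p)
    {g : β → ℝ} (hg : AEStronglyMeasurable g p) :
    ∫ ω, g (T ω) ∂ν = ∫ x, g x ∂p := by
  subst hmap; exact (integral_map hT.aemeasurable hg).symm

lemma transfer_integrable {T : α → β} {p : Measure β} (hT : Measurable T) (hmap : ν.map T = p)
    {g : β → ℝ} (hg : AEStronglyMeasurable g p) (hint : Integrable g p) :
    Integrable (fun ω => g (T ω)) ν := by
  subst hmap; exact (integrable_map_measure hg hT.aemeasurable).mp hint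

lemma transfer_integrable' {T : α → β} {p : Measure β} (hT : Measurable T) (hmap : ν.map T = p)
    {g : β → ℝ} (hg : AEStronglyMeasurable g p) (hint : Integrable (fun ω => g (T ω)) ν) :
    Integrable g p := by
  subst hmap; exact (integrable_map_measure hg hT.aemeasurable).mpr hint

lemma integral_bilin {F G : α → Fin d → ℝ} (u v : Fin d → ℝ)
    (hFG : ∀ i j, Integrable (fun ω => F ω i * G ω j) ν) :
    ∫ ω, (∑ i, u i * F ω i) * (∑ j, v j * G ω j) ∂ν
      = ∑ i, ∑ j, u i * v j * ∫ ω, F ω i * G ω j ∂ν := by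
  have hpt : (fun ω => (∑ i, u i * F ω i) * (∑ j, v j * G ω j))
      = fun ω => ∑ i, ∑ j, u i * v j * (F ω i * G ω j) := by
    funext ω
    rw [Finset.sum_mul_sum]
    exact Finset.sum_congr rfl fun i _ => Finset.sum_congr rfl fun j _ => by ring
  rw [hpt, integral_finset_sum _ (fun i _ =>
    integrable_finset_sum _ fun j _ => (hFG i j).const_mul _)]
  refine Finset.sum_congr rfl fun i _ => ?_
  rw [integral_finset_sum _ fun j _ => (hFG i j).const_mul _]
  exact Finset.sum_congr rfl fun j _ => integral_const_mul _ _

lemma integrable_bilin {F G : α → Fin d → ℝ} (u v : Fin d → ℝ)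
    (hFG : ∀ i j, Integrable (fun ω => F ω i * G ω j) ν) :
    Integrable (fun ω => (∑ i, u i * F ω i) * (∑ j, v j * G ω j)) ν := by
  have hpt : (fun ω => (∑ i, u i * F ω i) * (∑ j, v j * G ω j))
      = fun ω => ∑ i, ∑ j, u i * v j * (F ω i * G ω j) := by
    funext ω
    rw [Finset.sum_mul_sum]
    exact Finset.sum_congr rfl fun i _ => Finset.sum_congr rfl fun j _ => by ring
  rw [hpt]
  exact integrable_finset_sum _ fun i _ =>
    integrable_finset_sum _ fun j _ => (hFG i j).const_mul _

lemma sum_ortho (b : OrthonormalBasis (Fin d) ℝ (EuclideanSpace ℝ (Fin d))) (i j : Fin d) :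
    ∑ k, b k i * b k j = if i = j then (1 : ℝ) else 0 := by
  have h := b.sum_inner_mul_inner (EuclideanSpace.single i (1 : ℝ))
    (EuclideanSpace.single j (1 : ℝ))
  simp [EuclideanSpace.inner_single_left, EuclideanSpace.inner_single_right,
    EuclideanSpace.single_apply, starRingEnd_apply] at h
  rw [h]
  simp [eq_comm]

lemma onb_sq_sum (b : OrthonormalBasis (Fin d) ℝ (EuclideanSpace ℝ (Fin d))) (k : Fin d) :
    ∑ i, b k i * b k i = 1 := by
  have h2 : (inner ℝ (b k) (b k) : ℝ) = 1 := by
    rw [real_inner_self_eq_norm_sq, b.orthonormal.1 k]; norm_num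
  simpa only [PiLp.inner_apply, RCLike.inner_apply, conj_trivial] using h2

lemma sum_quad (b : OrthonormalBasis (Fin d) ℝ (EuclideanSpace ℝ (Fin d)))
    (M : Fin d → Fin d → ℝ) :
    ∑ k, ∑ i, ∑ j, b k i * b k j * M i j = ∑ i, M i i := by
  rw [Finset.sum_comm]
  refine Finset.sum_congr rfl fun i _ => ?_
  rw [Finset.sum_comm]
  have h2 : ∀ j, ∑ k, b k i * b k j * M i j = (if i = j then (1:ℝ) else 0) * M i j := by
    intro j; rw [← Finset.sum_mul, sum_ortho b i j]
  rw [Finset.sum_congr rfl fun j _ => h2 j]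
  simp

lemma quad_of_mulVec {M : Matrix (Fin d) (Fin d) ℝ} {u : Fin d → ℝ} {c : ℝ}
    (h : M *ᵥ u = c • u) (hn : ∑ i, u i * u i = 1) :
    ∑ i, ∑ j, u i * u j * M i j = c := by
  have key : ∀ i, ∑ j, u i * u j * M i j = u i * (c * u i) := by
    intro i
    have h2 : ∑ j, M i j * u j = c * u i := by
      have := congrFun h i
      simpa [Matrix.mulVec, dotProduct] using this
    rw [← h2, Finset.mul_sum]
    exact Finset.sum_congr rfl fun j _ => by ring
  rw [Finset.sum_congr rfl fun i _ => key i]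
  have : ∑ i, u i * (c * u i) = c * ∑ i, u i * u i := by
    rw [Finset.mul_sum]; exact Finset.sum_congr rfl fun i _ => by ring
  rw [this, hn, mul_one]

lemma sqrt_mulVec {A : Matrix (Fin d) (Fin d) ℝ} (hA : A.PosSemidef) (k : Fin d) :
    hA.sqrt *ᵥ ⇑(hA.1.eigenvectorBasis k)
      = Real.sqrt (hA.1.eigenvalues k) • ⇑(hA.1.eigenvectorBasis k) := by
  rw [Matrix.PosSemidef.sqrt, ← Matrix.mulVec_mulVec, ← Matrix.mulVec_mulVec,
    Matrix.IsHermitian.star_eigenvectorUnitary_mulVec, Matrix.diagonal_mulVec_single]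
  have h1 : ((RCLike.ofReal ∘ Real.sqrt ∘ hA.1.eigenvalues : Fin d → ℝ) k * 1)
      = Real.sqrt (hA.1.eigenvalues k) := by
    simp [RCLike.ofReal]
  rw [h1, show (Pi.single k (Real.sqrt (hA.1.eigenvalues k)) : Fin d → ℝ)
      = Real.sqrt (hA.1.eigenvalues k) • (Pi.single k (1:ℝ) : Fin d → ℝ) by
      rw [← Pi.single_smul, smul_eq_mul, mul_one],
    Matrix.mulVec_smul, Matrix.IsHermitian.eigenvectorUnitary_mulVec]

lemma sqrt_smul_one (c : ℝ) (hc : 0 ≤ c)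
    (h : ((c ^ 2) • (1 : Matrix (Fin d) (Fin d) ℝ)).PosSemidef) : h.sqrt = c • 1 := by
  have hev : ∀ k, h.1.eigenvalues k = c ^ 2 := by
    intro k
    have h1 := quad_of_mulVec (h.1.mulVec_eigenvectorBasis k) (onb_sq_sum _ k)
    have h2 := quad_of_mulVec (M := (c ^ 2) • (1 : Matrix (Fin d) (Fin d) ℝ))
      (u := ⇑(h.1.eigenvectorBasis k)) (c := c ^ 2)
      (by rw [Matrix.smul_mulVec, Matrix.one_mulVec]) (onb_sq_sum _ k)
    rw [← h1, h2]
  have hdiag : Matrix.diagonal ((RCLike.ofReal ∘ Real.sqrt ∘ h.1.eigenvalues : Fin d → ℝ))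
      = c • (1 : Matrix (Fin d) (Fin d) ℝ) := by
    ext i j
    by_cases hij : i = j
    · subst hij; simp [hev, Real.sqrt_sq hc]
    · simp [Matrix.diagonal_apply, hij]
  rw [Matrix.PosSemidef.sqrt, hdiag, Matrix.mul_smul, mul_one, Matrix.smul_mul,
    Matrix.mem_unitaryGroup_iff.mp h.1.eigenvectorUnitary.2]

end Helpers

section Core
variable {d : ℕ}

abbrev Ωd (d : ℕ) := (Fin d → ℝ) × (Fin d → ℝ)

lemma core (p q : Measure (Fin d → ℝ)) [IsProbabilityMeasure p] [IsProbabilityMeasure q]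
    (hp2 : Integrable (fun x => ∑ i, x i ^ 2) p)
    (hq2 : Integrable (fun y => ∑ i, y i ^ 2) q)
    (μv m : Fin d → ℝ) (σ σh : ℝ) (hσ : 0 ≤ σ)
    (hpm : ∀ i, (∫ x, x i ∂p) = μv i)
    (hpc : ∀ i j, (∫ x, (x i - μv i) * (x j - μv j) ∂p) = if i = j then σ ^ 2 else 0)
    (hqm : ∀ i, (∫ y, y i ∂q) = m i)
    (Shat : Matrix (Fin d) (Fin d) ℝ)
    (hqc : ∀ i j, (∫ y, (y i - m i) * (y j - m j) ∂q) = Shat i j)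
    (hps : Shat.PosSemidef)
    (htr : hps.sqrt.trace = d * σh)
    (ν : Measure (Ωd d)) (hν : IsProbabilityMeasure ν)
    (hfst : ν.map Prod.fst = p) (hsnd : ν.map Prod.snd = q) :
    (∑ i, (m i - μv i) ^ 2) + d * (σh - σ) ^ 2 ≤ ∫ z, ∑ i, (z.1 i - z.2 i) ^ 2 ∂ν := by
  have mX : ∀ i, Measurable (fun ω : Ωd d => ω.1 i) :=
    fun i => (measurable_pi_apply i).comp measurable_fst
  have mY : ∀ i, Measurable (fun ω : Ωd d => ω.2 i) :=
    fun i => (measurable_pi_apply i).comp measurable_snd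
  have mS1 : Measurable (fun x : Fin d → ℝ => ∑ i, x i ^ 2) :=
    Finset.measurable_sum _ fun i _ => (measurable_pi_apply i).pow_const 2
  set S : Ωd d → ℝ := fun ω => (∑ i, ω.1 i ^ 2) + (∑ i, ω.2 i ^ 2) with hSdef
  have hS : Integrable S ν := by
    refine Integrable.add ?_ ?_
    · exact transfer_integrable measurable_fst hfst mS1.aestronglyMeasurable hp2
    · exact transfer_integrable measurable_snd hsnd mS1.aestronglyMeasurable hq2
  have hSx : ∀ (i : Fin d) (ω : Ωd d), ω.1 i ^ 2 ≤ S ω := by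
    intro i ω
    have h1 : ω.1 i ^ 2 ≤ ∑ j, ω.1 j ^ 2 :=
      Finset.single_le_sum (f := fun j => ω.1 j ^ 2) (fun j _ => sq_nonneg _) (Finset.mem_univ i)
    have h2 : (0:ℝ) ≤ ∑ j, ω.2 j ^ 2 := Finset.sum_nonneg fun j _ => sq_nonneg _
    simp only [hSdef]; linarith
  have hSy : ∀ (i : Fin d) (ω : Ωd d), ω.2 i ^ 2 ≤ S ω := by
    intro i ω
    have h1 : ω.2 i ^ 2 ≤ ∑ j, ω.2 j ^ 2 :=
      Finset.single_le_sum (f := fun j => ω.2 j ^ 2) (fun j _ => sq_nonneg _) (Finset.mem_univ i)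
    have h2 : (0:ℝ) ≤ ∑ j, ω.1 j ^ 2 := Finset.sum_nonneg fun j _ => sq_nonneg _
    simp only [hSdef]; linarith
  have hiA : ∀ i j, Integrable (fun ω : Ωd d => (ω.1 i - μv i) * (ω.1 j - μv j)) ν :=
    fun i j => integrable_centered_mul (mX i).aestronglyMeasurable (mX j).aestronglyMeasurable
      hS (μv i) (μv j) (hSx i) (hSx j)
  have hiB : ∀ i j, Integrable (fun ω : Ωd d => (ω.2 i - m i) * (ω.2 j - m j)) ν :=
    fun i j => integrable_centered_mul (mY i).aestronglyMeasurable (mY j).aestronglyMeasurable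
      hS (m i) (m j) (hSy i) (hSy j)
  have hiC : ∀ i j, Integrable (fun ω : Ωd d => (ω.1 i - μv i) * (ω.2 j - m j)) ν :=
    fun i j => integrable_centered_mul (mX i).aestronglyMeasurable (mY j).aestronglyMeasurable
      hS (μv i) (m j) (hSx i) (hSy j)
  have hiXi : ∀ i, Integrable (fun ω : Ωd d => ω.1 i) ν :=
    fun i => integrable_of_sq (mX i).aestronglyMeasurable hS (hSx i)
  have hiYi : ∀ i, Integrable (fun ω : Ωd d => ω.2 i) ν :=
    fun i => integrable_of_sq (mY i).aestronglyMeasurable hS (hSy i)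
  have hiCost : ∀ i, Integrable (fun ω : Ωd d => (ω.1 i - ω.2 i) ^ 2) ν := by
    intro i
    have h := integrable_mul_of_sq (g := fun ω : Ωd d => ω.1 i - ω.2 i)
      (h := fun ω : Ωd d => ω.1 i - ω.2 i)
      ((mX i).sub (mY i)).aestronglyMeasurable ((mX i).sub (mY i)).aestronglyMeasurable
      (hS.const_mul 2)
      (fun ω => by
        have h1 : ω.1 i ^ 2 ≤ ∑ j, ω.1 j ^ 2 := Finset.single_le_sum
          (f := fun j => ω.1 j ^ 2) (fun j _ => sq_nonneg _) (Finset.mem_univ i)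
        have h2 : ω.2 i ^ 2 ≤ ∑ j, ω.2 j ^ 2 := Finset.single_le_sum
          (f := fun j => ω.2 j ^ 2) (fun j _ => sq_nonneg _) (Finset.mem_univ i)
        show (ω.1 i - ω.2 i) ^ 2 ≤ 2 * S ω
        simp only [hSdef]
        nlinarith [sq_nonneg (ω.1 i + ω.2 i)])
      (fun ω => by
        have h1 : ω.1 i ^ 2 ≤ ∑ j, ω.1 j ^ 2 := Finset.single_le_sum
          (f := fun j => ω.1 j ^ 2) (fun j _ => sq_nonneg _) (Finset.mem_univ i)
        have h2 : ω.2 i ^ 2 ≤ ∑ j, ω.2 j ^ 2 := Finset.single_le_sum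
          (f := fun j => ω.2 j ^ 2) (fun j _ => sq_nonneg _) (Finset.mem_univ i)
        show (ω.1 i - ω.2 i) ^ 2 ≤ 2 * S ω
        simp only [hSdef]
        nlinarith [sq_nonneg (ω.1 i + ω.2 i)])
    simpa [pow_two] using h
  have hEX : ∀ i, ∫ ω, (ω : Ωd d).1 i ∂ν = μv i := by
    intro i
    have h := transfer_int measurable_fst hfst (g := fun x => x i)
      (measurable_pi_apply i).aestronglyMeasurable
    simpa [hpm i] using h
  have hEY : ∀ i, ∫ ω, (ω : Ωd d).2 i ∂ν = m i := by
    intro i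
    have h := transfer_int measurable_snd hsnd (g := fun x => x i)
      (measurable_pi_apply i).aestronglyMeasurable
    simpa [hqm i] using h
  have hEA : ∀ i, ∫ ω, ((ω : Ωd d).1 i - μv i) ∂ν = 0 := by
    intro i
    rw [integral_sub (hiXi i) (integrable_const _), hEX i, integral_const]
    simp
  have hEB : ∀ i, ∫ ω, ((ω : Ωd d).2 i - m i) ∂ν = 0 := by
    intro i
    rw [integral_sub (hiYi i) (integrable_const _), hEY i, integral_const]
    simp
  have mC2 : ∀ (i j : Fin d) (c e : ℝ), Measurable (fun x : Fin d → ℝ => (x i - c) * (x j - e)) :=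
    fun i j c e => ((measurable_pi_apply i).sub measurable_const).mul
      ((measurable_pi_apply j).sub measurable_const)
  have hEAA : ∀ i j, ∫ ω, ((ω : Ωd d).1 i - μv i) * (ω.1 j - μv j) ∂ν
      = if i = j then σ ^ 2 else 0 := by
    intro i j
    have h := transfer_int measurable_fst hfst (g := fun x => (x i - μv i) * (x j - μv j))
      (mC2 i j _ _).aestronglyMeasurable
    simpa [hpc i j] using h
  have hEBB : ∀ i j, ∫ ω, ((ω : Ωd d).2 i - m i) * (ω.2 j - m j) ∂ν = Shat i j := by
    intro i j
    have h := transfer_int measurable_snd hsnd (g := fun x => (x i - m i) * (x j - m j))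
      (mC2 i j _ _).aestronglyMeasurable
    simpa [hqc i j] using h
  set Cm : Fin d → Fin d → ℝ := fun i j => ∫ ω, ((ω : Ωd d).1 i - μv i) * (ω.2 j - m j) ∂ν
    with hCmdef
  have hcost : ∫ z, ∑ i, ((z : Ωd d).1 i - z.2 i) ^ 2 ∂ν
      = ∑ i, (σ ^ 2 + Shat i i + (μv i - m i) ^ 2 - 2 * Cm i i) := by
    rw [integral_finset_sum _ fun i _ => hiCost i]
    refine Finset.sum_congr rfl fun i _ => ?_
    have hpt : (fun ω : Ωd d => (ω.1 i - ω.2 i) ^ 2)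
        = fun ω : Ωd d =>
          (ω.1 i - μv i) * (ω.1 i - μv i) + (ω.2 i - m i) * (ω.2 i - m i)
          + (μv i - m i) ^ 2
          - 2 * ((ω.1 i - μv i) * (ω.2 i - m i))
          + (2 * (μv i - m i)) * (ω.1 i - μv i)
          - (2 * (μv i - m i)) * (ω.2 i - m i) := by
      funext ω; ring
    have i1 := hiA i i
    have i2 := hiB i i
    have i3 : Integrable (fun _ : Ωd d => (μv i - m i) ^ 2) ν := integrable_const _
    have i4 : Integrable (fun ω : Ωd d => 2 * ((ω.1 i - μv i) * (ω.2 i - m i))) ν :=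
      (hiC i i).const_mul 2
    have i5 : Integrable (fun ω : Ωd d => (2 * (μv i - m i)) * (ω.1 i - μv i)) ν :=
      ((hiXi i).sub (integrable_const (μv i))).const_mul (2 * (μv i - m i))
    have i6 : Integrable (fun ω : Ωd d => (2 * (μv i - m i)) * (ω.2 i - m i)) ν :=
      ((hiYi i).sub (integrable_const (m i))).const_mul (2 * (μv i - m i))
    have iL1 : Integrable (fun ω : Ωd d => (ω.1 i - μv i) * (ω.1 i - μv i)
        + (ω.2 i - m i) * (ω.2 i - m i)) ν := i1.add i2
    have iL2 : Integrable (fun ω : Ωd d => (ω.1 i - μv i) * (ω.1 i - μv i)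
        + (ω.2 i - m i) * (ω.2 i - m i) + (μv i - m i) ^ 2) ν := iL1.add i3
    have iL3 : Integrable (fun ω : Ωd d => (ω.1 i - μv i) * (ω.1 i - μv i)
        + (ω.2 i - m i) * (ω.2 i - m i) + (μv i - m i) ^ 2
        - 2 * ((ω.1 i - μv i) * (ω.2 i - m i))) ν := iL2.sub i4
    have iL4 : Integrable (fun ω : Ωd d => (ω.1 i - μv i) * (ω.1 i - μv i)
        + (ω.2 i - m i) * (ω.2 i - m i) + (μv i - m i) ^ 2
        - 2 * ((ω.1 i - μv i) * (ω.2 i - m i))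
        + (2 * (μv i - m i)) * (ω.1 i - μv i)) ν := iL3.add i5
    rw [hpt, integral_sub iL4 i6, integral_add iL3 i5, integral_sub iL2 i4,
      integral_add iL1 i3, integral_add i1 i2,
      hEAA i i, hEBB i i, integral_const, integral_const_mul, integral_const_mul,
      integral_const_mul, hEA i, hEB i]
    simp [hCmdef]
  set b := hps.1.eigenvectorBasis with hbdef
  set ev := hps.1.eigenvalues with hevdef
  have hnk : ∀ k, ∑ i, (b k) i * (b k) i = 1 := fun k => onb_sq_sum b k
  have hkey : ∀ k, (∑ i, ∑ j, (b k) i * (b k) j * Cm i j) ≤ σ * Real.sqrt (ev k) := by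
    intro k
    have hraw2 : ∫ ω, (∑ i, b k i * ((ω : Ωd d).1 i - μv i))
        * (∑ j, b k j * (ω.1 j - μv j)) ∂ν
        = ∑ i, ∑ j, b k i * b k j * ∫ ω, ((ω : Ωd d).1 i - μv i) * (ω.1 j - μv j) ∂ν :=
      integral_bilin (F := fun (ω : Ωd d) i => ω.1 i - μv i)
        (G := fun (ω : Ωd d) i => ω.1 i - μv i) (fun i => b k i) (fun i => b k i) hiA
    have hZa2 : ∫ ω, (∑ i, b k i * ((ω : Ωd d).1 i - μv i))
        * (∑ j, b k j * (ω.1 j - μv j)) ∂ν = σ ^ 2 := by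
      rw [hraw2]
      calc ∑ i, ∑ j, (b k) i * (b k) j
            * ∫ ω, ((ω : Ωd d).1 i - μv i) * (ω.1 j - μv j) ∂ν
          = ∑ i, ∑ j, (b k) i * (b k) j * (if i = j then σ ^ 2 else 0) :=
            Finset.sum_congr rfl fun i _ => Finset.sum_congr rfl fun j _ => by rw [hEAA i j]
        _ = ∑ i, (b k) i * (b k) i * σ ^ 2 := by
            refine Finset.sum_congr rfl fun i _ => ?_
            simp [mul_ite]
        _ = σ ^ 2 := by rw [← Finset.sum_mul, hnk k, one_mul]
    have hraw3 : ∫ ω, (∑ i, b k i * ((ω : Ωd d).2 i - m i))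
        * (∑ j, b k j * (ω.2 j - m j)) ∂ν
        = ∑ i, ∑ j, b k i * b k j * ∫ ω, ((ω : Ωd d).2 i - m i) * (ω.2 j - m j) ∂ν :=
      integral_bilin (F := fun (ω : Ωd d) i => ω.2 i - m i)
        (G := fun (ω : Ωd d) i => ω.2 i - m i) (fun i => b k i) (fun i => b k i) hiB
    have hevq : ∑ i, ∑ j, (b k) i * (b k) j * Shat i j = ev k :=
      quad_of_mulVec (hps.1.mulVec_eigenvectorBasis k) (hnk k)
    have hZb2 : ∫ ω, (∑ i, b k i * ((ω : Ωd d).2 i - m i))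
        * (∑ j, b k j * (ω.2 j - m j)) ∂ν = ev k := by
      rw [hraw3]
      calc ∑ i, ∑ j, (b k) i * (b k) j
            * ∫ ω, ((ω : Ωd d).2 i - m i) * (ω.2 j - m j) ∂ν
          = ∑ i, ∑ j, (b k) i * (b k) j * Shat i j :=
            Finset.sum_congr rfl fun i _ => Finset.sum_congr rfl fun j _ => by rw [hEBB i j]
        _ = ev k := hevq
    have hraw1 : ∫ ω, (∑ i, b k i * ((ω : Ωd d).1 i - μv i))
        * (∑ j, b k j * (ω.2 j - m j)) ∂ν
        = ∑ i, ∑ j, b k i * b k j * ∫ ω, ((ω : Ωd d).1 i - μv i) * (ω.2 j - m j) ∂ν :=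
      integral_bilin (F := fun (ω : Ωd d) i => ω.1 i - μv i)
        (G := fun (ω : Ωd d) i => ω.2 i - m i) (fun i => b k i) (fun i => b k i) hiC
    have hZab : ∫ ω, (∑ i, b k i * ((ω : Ωd d).1 i - μv i))
        * (∑ j, b k j * (ω.2 j - m j)) ∂ν = ∑ i, ∑ j, b k i * b k j * Cm i j := by
      rw [hraw1]
    set ck := ∑ i, ∑ j, (b k) i * (b k) j * Cm i j with hckdef
    have hquad : ∀ t : ℝ, 0 ≤ σ ^ 2 * (t * t) + (2 * ck) * t + ev k := by
      intro t
      have h0 : 0 ≤ ∫ ω, (t * (∑ i, (b k) i * ((ω : Ωd d).1 i - μv i))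
          + ∑ i, (b k) i * (ω.2 i - m i)) ^ 2 ∂ν :=
        integral_nonneg fun ω => sq_nonneg _
      have iZaa : Integrable (fun ω : Ωd d => (∑ i, b k i * (ω.1 i - μv i))
          * (∑ j, b k j * (ω.1 j - μv j))) ν :=
        integrable_bilin (F := fun (ω : Ωd d) i => ω.1 i - μv i)
          (G := fun (ω : Ωd d) i => ω.1 i - μv i) (fun i => b k i) (fun i => b k i) hiA
      have iZab : Integrable (fun ω : Ωd d => (∑ i, b k i * (ω.1 i - μv i))
          * (∑ j, b k j * (ω.2 j - m j))) ν :=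
        integrable_bilin (F := fun (ω : Ωd d) i => ω.1 i - μv i)
          (G := fun (ω : Ωd d) i => ω.2 i - m i) (fun i => b k i) (fun i => b k i) hiC
      have iZbb : Integrable (fun ω : Ωd d => (∑ i, b k i * (ω.2 i - m i))
          * (∑ j, b k j * (ω.2 j - m j))) ν :=
        integrable_bilin (F := fun (ω : Ωd d) i => ω.2 i - m i)
          (G := fun (ω : Ωd d) i => ω.2 i - m i) (fun i => b k i) (fun i => b k i) hiB
      have hpt : (fun ω : Ωd d => (t * (∑ i, (b k) i * (ω.1 i - μv i))
            + ∑ i, (b k) i * (ω.2 i - m i)) ^ 2)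
          = fun ω : Ωd d =>
            (t * t) * ((∑ i, (b k) i * (ω.1 i - μv i)) * (∑ j, (b k) j * (ω.1 j - μv j)))
            + ((2 * t) * ((∑ i, (b k) i * (ω.1 i - μv i)) * (∑ j, (b k) j * (ω.2 j - m j)))
            + (∑ i, (b k) i * (ω.2 i - m i)) * (∑ j, (b k) j * (ω.2 j - m j))) := by
        funext ω; ring
      have iZc1 : Integrable (fun ω : Ωd d => (t * t) * ((∑ i, (b k) i * (ω.1 i - μv i))
          * (∑ j, (b k) j * (ω.1 j - μv j)))) ν := iZaa.const_mul _
      have iZc2 : Integrable (fun ω : Ωd d => (2 * t) * ((∑ i, (b k) i * (ω.1 i - μv i))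
          * (∑ j, (b k) j * (ω.2 j - m j)))) ν := iZab.const_mul _
      have iZc3 : Integrable (fun ω : Ωd d => (2 * t) * ((∑ i, (b k) i * (ω.1 i - μv i))
          * (∑ j, (b k) j * (ω.2 j - m j)))
          + (∑ i, (b k) i * (ω.2 i - m i)) * (∑ j, (b k) j * (ω.2 j - m j))) ν :=
        iZc2.add iZbb
      rw [hpt, integral_add iZc1 iZc3, integral_add iZc2 iZbb, integral_const_mul,
        integral_const_mul, hZa2, hZab, hZb2] at h0
      nlinarith [h0]
    have hdisc := discrim_le_zero hquad
    rw [discrim] at hdisc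
    have hevk : 0 ≤ ev k := hps.eigenvalues_nonneg k
    calc ck ≤ |ck| := le_abs_self _
      _ = Real.sqrt (ck ^ 2) := (Real.sqrt_sq_eq_abs ck).symm
      _ ≤ Real.sqrt (σ ^ 2 * ev k) := Real.sqrt_le_sqrt (by nlinarith)
      _ = σ * Real.sqrt (ev k) := by
          rw [Real.sqrt_mul (sq_nonneg σ), Real.sqrt_sq hσ]
  have hsum1 : ∑ i, Cm i i ≤ σ * ∑ k, Real.sqrt (ev k) := by
    rw [← sum_quad b Cm, Finset.mul_sum]
    exact Finset.sum_le_sum fun k _ => hkey k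
  have hsqrt_tr : ∑ k, Real.sqrt (ev k) = hps.sqrt.trace := by
    have h1 : ∀ k, ∑ i, ∑ j, (b k) i * (b k) j * hps.sqrt i j = Real.sqrt (ev k) :=
      fun k => quad_of_mulVec (sqrt_mulVec hps k) (hnk k)
    calc ∑ k, Real.sqrt (ev k)
        = ∑ k, ∑ i, ∑ j, (b k) i * (b k) j * hps.sqrt i j :=
          Finset.sum_congr rfl fun k _ => (h1 k).symm
      _ = ∑ i, hps.sqrt i i := sum_quad b _
      _ = hps.sqrt.trace := by simp [Matrix.trace, Matrix.diag]
  have htrS : ∑ i, Shat i i = ∑ k, ev k := by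
    have h1 : ∀ k, ∑ i, ∑ j, (b k) i * (b k) j * Shat i j = ev k :=
      fun k => quad_of_mulVec (hps.1.mulVec_eigenvectorBasis k) (hnk k)
    calc ∑ i, Shat i i
        = ∑ k, ∑ i, ∑ j, (b k) i * (b k) j * Shat i j := (sum_quad b _).symm
      _ = ∑ k, ev k := Finset.sum_congr rfl fun k _ => h1 k
  have hCauchy : ((d : ℝ) * σh) ^ 2 ≤ d * ∑ i, Shat i i := by
    rw [htrS, ← htr, ← hsqrt_tr]
    have h2 : ∑ k, Real.sqrt (ev k) ^ 2 = ∑ k, ev k :=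
      Finset.sum_congr rfl fun k _ => Real.sq_sqrt (hps.eigenvalues_nonneg k)
    calc (∑ k, Real.sqrt (ev k)) ^ 2
        ≤ ((Finset.univ : Finset (Fin d)).card : ℝ) * ∑ k, Real.sqrt (ev k) ^ 2 :=
          sq_sum_le_card_mul_sum_sq
      _ = d * ∑ k, ev k := by rw [h2, Finset.card_univ, Fintype.card_fin]
  rw [hcost]
  have hsplit : ∑ i, (σ ^ 2 + Shat i i + (μv i - m i) ^ 2 - 2 * Cm i i)
      = d * σ ^ 2 + (∑ i, Shat i i) + (∑ i, (μv i - m i) ^ 2) - 2 * ∑ i, Cm i i := by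
    rw [Finset.sum_sub_distrib, Finset.sum_add_distrib, Finset.sum_add_distrib,
      Finset.sum_const, ← Finset.mul_sum]
    simp [Finset.card_univ]
  rw [hsplit]
  have hmm : ∑ i, (m i - μv i) ^ 2 = ∑ i, (μv i - m i) ^ 2 :=
    Finset.sum_congr rfl fun i _ => by ring
  rw [hmm]
  rcases Nat.eq_zero_or_pos d with hd | hd
  · subst hd
    simp
  · have hd' : (0:ℝ) < d := by exact_mod_cast hd
    have hT : (d : ℝ) * σh ^ 2 ≤ ∑ i, Shat i i := by nlinarith [hCauchy]
    have hC2 : ∑ i, Cm i i ≤ σ * ((d : ℝ) * σh) := by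
      rw [← htr, ← hsqrt_tr]; exact hsum1
    nlinarith [hT, hC2]

end Core


section Loc
variable {d : ℕ} {f : Measure (Fin d → ℝ)} [IsProbabilityMeasure f]

lemma locT_meas (c : Fin d → ℝ) (s : ℝ) : Measurable (fun z : Fin d → ℝ => s • z + c) :=
  (measurable_id.const_smul s).add_const c

lemma loc_prob (c : Fin d → ℝ) (s : ℝ) : IsProbabilityMeasure (locScaleFam f c s) := by
  unfold locScaleFam
  exact Measure.isProbabilityMeasure_map (locT_meas c s).aemeasurable

lemma loc_int2 (hfz : ∀ i, Integrable (fun z : Fin d → ℝ => z i) f)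
    (hfzz : ∀ i j, Integrable (fun z : Fin d → ℝ => z i * z j) f)
    (c : Fin d → ℝ) (s : ℝ) :
    Integrable (fun x => ∑ i, x i ^ 2) (locScaleFam f c s) := by
  have mS1 : Measurable (fun x : Fin d → ℝ => ∑ i, x i ^ 2) :=
    Finset.measurable_sum _ fun i _ => (measurable_pi_apply i).pow_const 2
  refine transfer_integrable' (p := locScaleFam f c s) (locT_meas c s) rfl mS1.aestronglyMeasurable ?_
  have hpt : (fun z : Fin d → ℝ => ∑ i, ((s • z + c) i) ^ 2)
      = fun z : Fin d → ℝ => ∑ i,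
        (s ^ 2 * (z i * z i) + (2 * s * c i) * z i + (c i) ^ 2) := by
    funext z
    refine Finset.sum_congr rfl fun i _ => ?_
    simp only [Pi.add_apply, Pi.smul_apply, smul_eq_mul]
    ring
  rw [hpt]
  exact integrable_finset_sum _ fun i _ =>
    (((hfzz i i).const_mul _).add ((hfz i).const_mul _)).add (integrable_const _)

lemma loc_mean (hfz : ∀ i, Integrable (fun z : Fin d → ℝ => z i) f)
    (hf0 : ∀ i, (∫ z, z i ∂f) = 0) (c : Fin d → ℝ) (s : ℝ) (i : Fin d) :
    ∫ x, x i ∂(locScaleFam f c s) = c i := by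
  have h := transfer_int (p := locScaleFam f c s) (locT_meas c s) rfl (g := fun x => x i)
    (measurable_pi_apply i).aestronglyMeasurable
  rw [← h]
  have hpt : (fun z : Fin d → ℝ => (s • z + c) i) = fun z : Fin d → ℝ => s * z i + c i := by
    funext z; simp [Pi.smul_apply, smul_eq_mul]
  rw [hpt, integral_add ((hfz i).const_mul s) (integrable_const _), integral_const_mul,
    hf0 i, integral_const]
  simp

set_option linter.unusedSectionVars false in
lemma loc_cov (hfI : ∀ i j, (∫ z, z i * z j ∂f) = if i = j then (1:ℝ) else 0)
    (c : Fin d → ℝ) (s : ℝ) (i j : Fin d) :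
    ∫ x, (x i - c i) * (x j - c j) ∂(locScaleFam f c s)
      = if i = j then s ^ 2 else 0 := by
  have mC2 : Measurable (fun x : Fin d → ℝ => (x i - c i) * (x j - c j)) :=
    ((measurable_pi_apply i).sub measurable_const).mul
      ((measurable_pi_apply j).sub measurable_const)
  have h := transfer_int (p := locScaleFam f c s) (locT_meas c s) rfl
    (g := fun x => (x i - c i) * (x j - c j)) mC2.aestronglyMeasurable
  rw [← h]
  have hpt : (fun z : Fin d → ℝ => ((s • z + c) i - c i) * ((s • z + c) j - c j))
      = fun z : Fin d → ℝ => s ^ 2 * (z i * z j) := by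
    funext z; simp only [Pi.add_apply, Pi.smul_apply, smul_eq_mul]; ring
  rw [hpt, integral_const_mul, hfI i j]
  by_cases hij : i = j <;> simp [hij]

end Loc

/-- For a location-scale family, any predictive density `q` with mean `m` and covariance
`Σ̂` is dominated pointwise by the plug-in density `p(·|m, σ̂)` with
`σ̂ = (1/d) tr(Σ̂^{1/2})`. -/
theorem plugin_dominates_locScale {d : ℕ} (f : Measure (Fin d → ℝ)) [IsProbabilityMeasure f]
    (hf2 : Integrable (fun z => ∑ i, z i ^ 2) f)
    (hf0 : ∀ i, (∫ z, z i ∂f) = 0)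
    (hfI : ∀ i j, (∫ z, z i * z j ∂f) = if i = j then (1 : ℝ) else 0)
    (μ : Fin d → ℝ) {σ : ℝ} (hσ : 0 < σ)
    (q : Measure (Fin d → ℝ)) [IsProbabilityMeasure q]
    (hq2 : Integrable (fun y => ∑ i, y i ^ 2) q)
    (m : Fin d → ℝ) (hm : ∀ i, m i = ∫ y, y i ∂q)
    (Shat : Matrix (Fin d) (Fin d) ℝ)
    (hShat : ∀ i j, Shat i j = ∫ y, (y i - m i) * (y j - m j) ∂q)
    (hps : Shat.PosSemidef)
    (σhat : ℝ) (hσhat : σhat = (1 / (d : ℝ)) * hps.sqrt.trace) :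
    W2sq (locScaleFam f μ σ) q ≥ (∑ i, (m i - μ i) ^ 2) + d * (σhat - σ) ^ 2 ∧
    W2sq (locScaleFam f μ σ) (locScaleFam f m σhat)
      = (∑ i, (m i - μ i) ^ 2) + d * (σhat - σ) ^ 2 := by
  -- coordinate integrability for f
  have hbnd : ∀ (i : Fin d) (z : Fin d → ℝ), z i ^ 2 ≤ ∑ j, z j ^ 2 := fun i z =>
    Finset.single_le_sum (f := fun j => z j ^ 2) (fun j _ => sq_nonneg _) (Finset.mem_univ i)
  have hfz : ∀ i, Integrable (fun z : Fin d → ℝ => z i) f := fun i =>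
    integrable_of_sq (measurable_pi_apply i).aestronglyMeasurable hf2 (fun z => hbnd i z)
  have hfzz : ∀ i j, Integrable (fun z : Fin d → ℝ => z i * z j) f := fun i j =>
    integrable_mul_of_sq (measurable_pi_apply i).aestronglyMeasurable
      (measurable_pi_apply j).aestronglyMeasurable hf2 (fun z => hbnd i z) (fun z => hbnd j z)
  haveI hP1 : IsProbabilityMeasure (locScaleFam f μ σ) := loc_prob μ σ
  haveI hP2 : IsProbabilityMeasure (locScaleFam f m σhat) := loc_prob m σhat
  have hp2 := loc_int2 hfz hfzz μ σ
  have hpm : ∀ i, ∫ x, x i ∂(locScaleFam f μ σ) = μ i := loc_mean hfz hf0 μ σ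
  have hpc : ∀ i j, ∫ x, (x i - μ i) * (x j - μ j) ∂(locScaleFam f μ σ)
      = if i = j then σ ^ 2 else 0 := loc_cov hfI μ σ
  -- σhat facts
  have hσh0 : 0 ≤ σhat := by
    rw [hσhat]
    refine mul_nonneg (by positivity) ?_
    have hdg : ∀ i, 0 ≤ hps.sqrt i i := by
      intro i
      rw [Matrix.PosSemidef.sqrt, Matrix.mul_apply]
      refine Finset.sum_nonneg fun k _ => ?_
      rw [Matrix.mul_diagonal, Matrix.star_apply, star_trivial]
      have := Real.sqrt_nonneg (hps.1.eigenvalues k)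
      simp only [Function.comp_apply, RCLike.ofReal_real_eq_id, id]
      nlinarith [mul_nonneg (sq_nonneg (hps.1.eigenvectorUnitary.1 i k)) this]
    have : hps.sqrt.trace = ∑ i, hps.sqrt i i := by simp [Matrix.trace, Matrix.diag]
    rw [this]
    exact Finset.sum_nonneg fun i _ => hdg i
  have htr1 : hps.sqrt.trace = d * σhat := by
    rcases Nat.eq_zero_or_pos d with h0 | h0
    · subst h0
      simp [Matrix.trace]
    · have hne : (d : ℝ) ≠ 0 := by
        exact_mod_cast h0.ne'
      rw [hσhat]
      field_simp
  have hqm' : ∀ i, (∫ y, y i ∂q) = m i := fun i => (hm i).symm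
  have hqc' : ∀ i j, (∫ y, (y i - m i) * (y j - m j) ∂q) = Shat i j :=
    fun i j => (hShat i j).symm
  have hbdd : BddBelow {r : ℝ | ∃ ν : Measure ((Fin d → ℝ) × (Fin d → ℝ)),
      IsProbabilityMeasure ν ∧ ν.map Prod.fst = locScaleFam f μ σ ∧
      ν.map Prod.snd = locScaleFam f m σhat ∧
      r = ∫ z, ∑ i, (z.1 i - z.2 i) ^ 2 ∂ν} := by
    refine ⟨0, ?_⟩
    rintro r ⟨ν, hν, -, -, rfl⟩
    exact integral_nonneg fun z => Finset.sum_nonneg fun i _ => sq_nonneg _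
  constructor
  · -- part 1
    unfold W2sq
    refine le_csInf ⟨_, (locScaleFam f μ σ).prod q, inferInstance, by simp, by simp, rfl⟩ ?_
    rintro r ⟨ν, hν, hfst, hsnd, rfl⟩
    exact core _ _ hp2 hq2 μ m σ σhat hσ.le hpm hpc hqm' Shat hqc' hps htr1 ν hν hfst hsnd
  · -- part 2
    have hq2' := loc_int2 hfz hfzz m σhat
    have hqm2 : ∀ i, ∫ y, y i ∂(locScaleFam f m σhat) = m i := loc_mean hfz hf0 m σhat
    have hqc2 := loc_cov hfI m σhat
    -- the matrix σhat² • 1 and its square root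
    have h1psd : (σhat • (1 : Matrix (Fin d) (Fin d) ℝ)).PosSemidef := by
      rw [Matrix.smul_one_eq_diagonal]
      exact Matrix.PosSemidef.diagonal fun i => hσh0
    have hNpsd : ((σhat ^ 2) • (1 : Matrix (Fin d) (Fin d) ℝ)).PosSemidef := by
      rw [Matrix.smul_one_eq_diagonal]
      exact Matrix.PosSemidef.diagonal fun i => sq_nonneg _
    have hsq : (σhat • (1 : Matrix (Fin d) (Fin d) ℝ)) ^ 2 = (σhat ^ 2) • 1 := by
      rw [pow_two, smul_mul_smul_comm, one_mul, pow_two]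
    have hsqrtN : hNpsd.sqrt = σhat • 1 := sqrt_smul_one σhat hσh0 hNpsd
    have htrN : hNpsd.sqrt.trace = d * σhat := by
      rw [hsqrtN, Matrix.trace_smul, Matrix.trace_one]
      simp [Fintype.card_fin, mul_comm]
    have hqcN : ∀ i j, ∫ y, (y i - m i) * (y j - m j) ∂(locScaleFam f m σhat)
        = ((σhat ^ 2) • (1 : Matrix (Fin d) (Fin d) ℝ)) i j := by
      intro i j
      rw [hqc2 i j]
      simp only [Matrix.smul_apply, Matrix.one_apply, smul_eq_mul, mul_ite, mul_one, mul_zero]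
    -- the optimal coupling
    have hTT : Measurable (fun z : Fin d → ℝ => (σ • z + μ, σhat • z + m)) :=
      (locT_meas μ σ).prodMk (locT_meas m σhat)
    have mCost : Measurable (fun z : (Fin d → ℝ) × (Fin d → ℝ) => ∑ i, (z.1 i - z.2 i) ^ 2) :=
      Finset.measurable_sum _ fun i _ =>
        (((measurable_pi_apply i).comp measurable_fst).sub
          ((measurable_pi_apply i).comp measurable_snd)).pow_const 2
    have hB : ∫ z, ∑ i, (z.1 i - z.2 i) ^ 2
          ∂((f.map (fun z : Fin d → ℝ => (σ • z + μ, σhat • z + m))))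
        = (∑ i, (m i - μ i) ^ 2) + d * (σhat - σ) ^ 2 := by
      rw [integral_map hTT.aemeasurable mCost.aestronglyMeasurable]
      have hpt : (fun z : Fin d → ℝ =>
            ∑ i, ((σ • z + μ, σhat • z + m).1 i - (σ • z + μ, σhat • z + m).2 i) ^ 2)
          = fun z : Fin d → ℝ => ∑ i, ((σ - σhat) ^ 2 * (z i * z i)
            + (2 * (σ - σhat) * (μ i - m i)) * z i + (μ i - m i) ^ 2) := by
        funext z
        refine Finset.sum_congr rfl fun i _ => ?_
        simp only [Pi.add_apply, Pi.smul_apply, smul_eq_mul]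
        ring
      have hint : ∀ i : Fin d, Integrable (fun z : Fin d → ℝ => (σ - σhat) ^ 2 * (z i * z i)
          + (2 * (σ - σhat) * (μ i - m i)) * z i + (μ i - m i) ^ 2) f := fun i =>
        (((hfzz i i).const_mul _).add ((hfz i).const_mul _)).add (integrable_const _)
      have hint1 : ∀ i : Fin d, Integrable (fun z : Fin d → ℝ => (σ - σhat) ^ 2 * (z i * z i)
          + (2 * (σ - σhat) * (μ i - m i)) * z i) f := fun i =>
        ((hfzz i i).const_mul _).add ((hfz i).const_mul _)
      rw [hpt, integral_finset_sum _ fun i _ => hint i]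
      have hterm : ∀ i : Fin d, ∫ z, ((σ - σhat) ^ 2 * (z i * z i)
          + (2 * (σ - σhat) * (μ i - m i)) * z i + (μ i - m i) ^ 2) ∂f
          = (σ - σhat) ^ 2 + (μ i - m i) ^ 2 := by
        intro i
        rw [integral_add (hint1 i) (integrable_const _),
          integral_add ((hfzz i i).const_mul _) ((hfz i).const_mul _),
          integral_const_mul, integral_const_mul, hfI i i, hf0 i, integral_const]
        simp
      rw [Finset.sum_congr rfl fun i _ => hterm i, Finset.sum_add_distrib, Finset.sum_const,
        Finset.card_univ, Fintype.card_fin]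
      have : ∑ i, (μ i - m i) ^ 2 = ∑ i, (m i - μ i) ^ 2 :=
        Finset.sum_congr rfl fun i _ => by ring
      rw [nsmul_eq_mul, this]
      ring
    have hfst0 : (f.map (fun z : Fin d → ℝ => (σ • z + μ, σhat • z + m))).map Prod.fst
        = locScaleFam f μ σ := by
      rw [Measure.map_map measurable_fst hTT]
      rfl
    have hsnd0 : (f.map (fun z : Fin d → ℝ => (σ • z + μ, σhat • z + m))).map Prod.snd
        = locScaleFam f m σhat := by
      rw [Measure.map_map measurable_snd hTT]
      rfl
    refine le_antisymm ?_ ?_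
    · -- upper bound: the explicit coupling
      refine csInf_le hbdd ?_
      exact ⟨f.map (fun z : Fin d → ℝ => (σ • z + μ, σhat • z + m)),
        Measure.isProbabilityMeasure_map hTT.aemeasurable, hfst0, hsnd0, hB.symm⟩
    · -- lower bound via core
      unfold W2sq
      refine le_csInf ⟨_, (locScaleFam f μ σ).prod (locScaleFam f m σhat), inferInstance,
        by simp, by simp, rfl⟩ ?_
      rintro r ⟨ν, hν, hfst, hsnd, rfl⟩
      exact core _ _ hp2 hq2' μ m σ σhat hσ.le hpm hpc hqm2 _ hqcN hNpsd htrN ν hν hfst hsnd
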